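/- The household steady-state policies of Proposition 1 are verified: with S := (iss/(1+iss))·((1+i₁)·b₀ − z·τ₁), c := (1/(1+γ))·(w·z + S), N := (1/(1+γ))·(1/(w·z))·(w·z − γ·S), and b₁ := ((1+i₁)·b₀ − z·τ₁)/(1+iss), one has (i) the intratemporal labor-supply first-order condition w·z·(1−N) = γ·c, and (ii) the stationary budget constraint c = w·z·N + iss·b₁. -/

import Mathlib

/-- Verification of the household steady-state policies of Proposition 1:
the intratemporal labor-supply FOC and the stationary budget constraint hold. -/
theorem stmt_2 (β γ w z b₀ i₁ τ₁ : ℝ)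
    (hβ0 : 0 < β) (hβ1 : β < 1) (hγ : 0 < γ) (hw : 0 < w) (hz : 0 < z)
    (iss S c N b₁ : ℝ)
    (hiss : iss = (1 - β) / β)
    (hS : S = (iss / (1 + iss)) * ((1 + i₁) * b₀ - z * τ₁))
    (hc : c = (1 / (1 + γ)) * (w * z + S))
    (hN : N = (1 / (1 + γ)) * (1 / (w * z)) * (w * z - γ * S))
    (hb : b₁ = ((1 + i₁) * b₀ - z * τ₁) / (1 + iss)) :
    w * z * (1 - N) = γ * c ∧ c = w * z * N + iss * b₁ := by
  have hβ : β ≠ 0 := ne_of_gt hβ0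
  have h1iss : 1 + iss = 1 / β := by rw [hiss]; field_simp; ring
  have h1iss0 : 1 + iss ≠ 0 := by rw [h1iss]; positivity
  have hγ1 : (1 : ℝ) + γ ≠ 0 := by positivity
  have hwz : w * z ≠ 0 := by positivity
  subst hS hc hN hb
  constructor
  · field_simp
    ring
  · field_simp
    ring
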